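/- For any prime p ≥ 5 with p ≡ 5 (mod 6), the sum ∑_{k=0}^{(p-5)/6} 1/(3k+2) ≡ -(2/3) q_2 (mod p), where q_2 = (2^{p-1}-1)/p. -/

import Mathlib

open Finset

lemma prod_sub_eps {R : Type*} [CommRing R] {ι : Type*} [DecidableEq ι] (s : Finset ι)
    (f g : ι → R) (c : R) (hc : c * c = 0) :
    ∏ j ∈ s, (f j - c * g j) =
      ∏ j ∈ s, f j - c * ∑ j ∈ s, g j * ∏ i ∈ s.erase j, f i := by
  induction s using Finset.induction_on with
  | empty => simp
  | insert a s ha ih =>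
    rw [Finset.prod_insert ha, Finset.prod_insert ha, Finset.sum_insert ha, ih,
      Finset.erase_insert ha]
    have h2 : ∀ j ∈ s, g j * ∏ i ∈ (insert a s).erase j, f i
        = f a * (g j * ∏ i ∈ s.erase j, f i) := by
      intro j hj
      have hja : j ≠ a := by rintro rfl; exact ha hj
      rw [Finset.erase_insert_of_ne hja.symm,
        Finset.prod_insert (fun h => ha (Finset.mem_of_mem_erase h))]
      ring
    rw [Finset.sum_congr rfl h2, ← Finset.mul_sum]
    linear_combination (g a * ∑ j ∈ s, g j * ∏ i ∈ s.erase j, f i) * hc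

lemma lerch {p : ℕ} (hp : p.Prime) (a : ℕ) (ha : ¬ p ∣ a) :
    (a : ZMod p) * (((a ^ (p - 1) - 1) / p : ℕ) : ZMod p) =
      ∑ j ∈ Finset.Ico 1 p, ((a * j / p : ℕ) : ZMod p) * (j : ZMod p)⁻¹ := by
  haveI : Fact p.Prime := ⟨hp⟩
  have hp1 : 1 < p := hp.one_lt
  have ha0 : (a : ZMod p) ≠ 0 := by
    rwa [Ne, ZMod.natCast_eq_zero_iff]
  have hferm : (a : ZMod p) ^ (p - 1) = 1 := ZMod.pow_card_sub_one_eq_one ha0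
  have ha1 : 1 ≤ a := Nat.pos_of_ne_zero (by rintro rfl; exact ha (dvd_zero p))
  have hapow : 1 ≤ a ^ (p - 1) := Nat.one_le_pow _ _ ha1
  have hdvd : p ∣ a ^ (p - 1) - 1 := by
    rw [← ZMod.natCast_eq_zero_iff]
    push_cast [Nat.cast_sub hapow]
    rw [hferm]; ring
  set q : ℕ := (a ^ (p - 1) - 1) / p with hqdef
  have hq : a ^ (p - 1) = p * q + 1 := by
    have h2 : p * q = a ^ (p - 1) - 1 := Nat.mul_div_cancel' hdvd
    omega
  -- work in ZMod (p^2)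
  set R := ZMod (p ^ 2) with hR
  -- the permutation fact
  have hmem : ∀ j ∈ Finset.Ico 1 p, a * j % p ∈ Finset.Ico 1 p := by
    intro j hj
    simp only [Finset.mem_Ico] at hj ⊢
    refine ⟨?_, Nat.mod_lt _ (by omega)⟩
    rcases Nat.eq_zero_or_pos (a * j % p) with h | h
    · exfalso
      have : p ∣ a * j := Nat.dvd_of_mod_eq_zero h
      rcases (hp.dvd_mul.mp this) with h' | h'
      · exact ha h'
      · exact absurd (Nat.le_of_dvd (by omega) h') (by omega)
    · exact h
  have hinj : ∀ j₁ ∈ Finset.Ico 1 p, ∀ j₂ ∈ Finset.Ico 1 p,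
      a * j₁ % p = a * j₂ % p → j₁ = j₂ := by
    intro j₁ h₁ j₂ h₂ h
    simp only [Finset.mem_Ico] at h₁ h₂
    have hc : ((a * j₁ : ℕ) : ZMod p) = ((a * j₂ : ℕ) : ZMod p) := by
      rw [← ZMod.natCast_mod, ← ZMod.natCast_mod (a * j₂), h]
    push_cast at hc
    have hj : (j₁ : ZMod p) = (j₂ : ZMod p) := mul_left_cancel₀ ha0 hc
    have := (ZMod.natCast_eq_natCast_iff _ _ _).mp hj
    rw [Nat.ModEq] at this
    rw [Nat.mod_eq_of_lt h₁.2, Nat.mod_eq_of_lt h₂.2] at this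
    exact this
  have himg : (Finset.Ico 1 p).image (fun j => a * j % p) = Finset.Ico 1 p := by
    apply Finset.eq_of_subset_of_card_le
    · intro x hx
      rcases Finset.mem_image.mp hx with ⟨j, hj, rfl⟩
      exact hmem j hj
    · rw [Finset.card_image_of_injOn (fun x hx y hy h => hinj x hx y hy h)]
  have hperm : ∏ j ∈ Finset.Ico 1 p, (((a * j % p : ℕ) : R)) = ∏ j ∈ Finset.Ico 1 p, (j : R) := by
    conv_rhs => rw [← himg]
    rw [Finset.prod_image (fun x hx y hy h => hinj x hx y hy h)]
  have hpp : (p : R) * (p : R) = 0 := by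
    have h0 : ((p ^ 2 : ℕ) : R) = 0 := ZMod.natCast_self _
    push_cast at h0
    linear_combination h0
  have hsplit : ∀ j : ℕ, (((a * j % p : ℕ) : R)) =
      (a : R) * (j : R) - (p : R) * ((a * j / p : ℕ) : R) := by
    intro j
    have h := Nat.div_add_mod (a * j) p
    have h2 : ((p * (a * j / p) + a * j % p : ℕ) : R) = ((a * j : ℕ) : R) := by rw [h]
    push_cast +zetaDelta at h2
    linear_combination h2
  have key : ∏ j ∈ Finset.Ico 1 p, ((a : R) * (j : R) - (p : R) * ((a * j / p : ℕ) : R))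
      = ∏ j ∈ Finset.Ico 1 p, (j : R) := by
    rw [← hperm]
    exact Finset.prod_congr rfl (fun j _ => (hsplit j).symm)
  rw [prod_sub_eps _ _ _ _ hpp] at key
  have hcard : (Finset.Ico 1 p).card = p - 1 := by rw [Nat.card_Ico]
  have hprod1 : ∏ j ∈ Finset.Ico 1 p, ((a : R) * (j : R))
      = (a : R) ^ (p - 1) * ∏ j ∈ Finset.Ico 1 p, (j : R) := by
    rw [Finset.prod_mul_distrib, Finset.prod_const, hcard]
  have hprode : ∀ j ∈ Finset.Ico 1 p,
      ((a * j / p : ℕ) : R) * ∏ i ∈ (Finset.Ico 1 p).erase j, ((a : R) * (i : R))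
      = ((a * j / p : ℕ) : R) * ((a : R) ^ (p - 2) * ∏ i ∈ (Finset.Ico 1 p).erase j, (i : R)) := by
    intro j hj
    rw [Finset.prod_mul_distrib, Finset.prod_const, Finset.card_erase_of_mem hj, hcard]
    have h12 : p - 1 - 1 = p - 2 := by omega
    rw [h12]
  rw [Finset.sum_congr rfl hprode, hprod1] at key
  -- cast hq
  have hqR : (a : R) ^ (p - 1) = (p : R) * (q : R) + 1 := by
    have : ((a ^ (p - 1) : ℕ) : R) = ((p * q + 1 : ℕ) : R) := by rw [hq]
    push_cast +zetaDelta at this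
    linear_combination this
  rw [hqR] at key
  set Wn : ℕ := ∏ j ∈ Finset.Ico 1 p, j with hWn
  set Sn : ℕ := ∑ j ∈ Finset.Ico 1 p, a * j / p * (a ^ (p - 2) * ∏ i ∈ (Finset.Ico 1 p).erase j, i)
    with hSn
  have hcastS : ((p * (q * Wn) : ℕ) : R) = ((p * Sn : ℕ) : R) := by
    rw [hWn, hSn]
    push_cast +zetaDelta
    linear_combination key
  have hmodeq : p * (q * Wn) ≡ p * Sn [MOD p ^ 2] := (ZMod.natCast_eq_natCast_iff _ _ _).mp hcastS
  have hmod : ((q * Wn : ℕ) : ZMod p) = ((Sn : ℕ) : ZMod p) := by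
    rw [ZMod.natCast_eq_natCast_iff]
    have h2 : p * (q * Wn) ≡ p * Sn [MOD p * p] := by rw [← pow_two]; exact hmodeq
    exact Nat.ModEq.mul_left_cancel' (by omega) h2
  -- now work in ZMod p
  have hjne : ∀ j ∈ Finset.Ico 1 p, (j : ZMod p) ≠ 0 := by
    intro j hj
    simp only [Finset.mem_Ico] at hj
    rw [Ne, ZMod.natCast_eq_zero_iff]
    intro hd
    exact absurd (Nat.le_of_dvd (by omega) hd) (by omega)
  have hWne : ((Wn : ℕ) : ZMod p) ≠ 0 := by
    rw [hWn]
    push_cast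
    rw [Finset.prod_ne_zero_iff]
    exact hjne
  have hE : ∀ j ∈ Finset.Ico 1 p, (∏ i ∈ (Finset.Ico 1 p).erase j, (i : ZMod p))
      = (j : ZMod p)⁻¹ * (Wn : ZMod p) := by
    intro j hj
    have h := Finset.mul_prod_erase (Finset.Ico 1 p) (fun i => (i : ZMod p)) hj
    have hWc : ((Wn : ℕ) : ZMod p) = ∏ i ∈ Finset.Ico 1 p, (i : ZMod p) := by
      rw [hWn]; push_cast; rfl
    rw [← hWc] at h
    field_simp [hjne j hj]
    linear_combination h
  have hSnZ : ((Sn : ℕ) : ZMod p) =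
      (∑ j ∈ Finset.Ico 1 p, ((a * j / p : ℕ) : ZMod p) * (j : ZMod p)⁻¹)
        * ((a : ZMod p) ^ (p - 2) * (Wn : ZMod p)) := by
    rw [hSn]
    push_cast
    rw [Finset.sum_mul]
    refine Finset.sum_congr rfl (fun j hj => ?_)
    rw [hE j hj]
    ring
  rw [hSnZ] at hmod
  push_cast at hmod
  have hfin : (q : ZMod p) = (∑ j ∈ Finset.Ico 1 p, ((a * j / p : ℕ) : ZMod p) * (j : ZMod p)⁻¹)
      * (a : ZMod p) ^ (p - 2) := by
    apply mul_right_cancel₀ hWne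
    linear_combination hmod
  rw [hfin]
  have hpow : (a : ZMod p) * (a : ZMod p) ^ (p - 2) = 1 := by
    rw [← pow_succ']
    have : p - 2 + 1 = p - 1 := by omega
    rw [this, hferm]
  linear_combination (∑ j ∈ Finset.Ico 1 p, ((a * j / p : ℕ) : ZMod p) * (j : ZMod p)⁻¹) * hpow

def T (p a b : ℕ) : ZMod p := ∑ j ∈ Finset.Ico a b, (j : ZMod p)⁻¹

lemma T_reflect {p : ℕ} (hp : p.Prime) (a b : ℕ) (ha : 1 ≤ a) (hb : b ≤ p + 1) :
    T p a b = -T p (p + 1 - b) (p + 1 - a) := by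
  haveI : Fact p.Prime := ⟨hp⟩
  have hp1 : 1 < p := hp.one_lt
  rw [T, T, ← Finset.sum_neg_distrib]
  refine Finset.sum_nbij' (fun j => p - j) (fun j => p - j) ?_ ?_ ?_ ?_ ?_
  · intro j hj; simp only [Finset.mem_Ico] at *; omega
  · intro j hj; simp only [Finset.mem_Ico] at *; omega
  · intro j hj; simp only [Finset.mem_Ico] at hj; show p - (p - j) = j; omega
  · intro j hj; simp only [Finset.mem_Ico] at hj; show p - (p - j) = j; omega
  · intro j hj
    simp only [Finset.mem_Ico] at hj
    have hjp : j ≤ p := by omega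
    have hcast : ((p - j : ℕ) : ZMod p) = -(j : ZMod p) := by
      push_cast [Nat.cast_sub hjp]
      simp
    rw [hcast, inv_neg, neg_neg]

lemma sum_floor_const (p c d v : ℕ) (f : ℕ → ℕ) (hf : ∀ j, c ≤ j → j < d → f j = v) :
    ∑ j ∈ Finset.Ico c d, ((f j : ℕ) : ZMod p) * (j : ZMod p)⁻¹ = (v : ZMod p) * T p c d := by
  rw [T, Finset.mul_sum]
  refine Finset.sum_congr rfl (fun j hj => ?_)
  rw [Finset.mem_Ico] at hj
  rw [hf j hj.1 hj.2]

lemma core {p : ℕ} (hp : p.Prime) (n : ℕ) (hn : p = 6 * n + 5) :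
    (3 : ZMod p) * (∑ k ∈ Finset.range (n + 1), ((3 * k + 2 : ℕ) : ZMod p)⁻¹)
      + 2 * (((2 ^ (p - 1) - 1) / p : ℕ) : ZMod p) = 0 := by
  haveI : Fact p.Prime := ⟨hp⟩
  have hp1 : 1 < p := hp.one_lt
  have h6 : ¬ p ∣ 6 := by
    intro h
    have h1 := Nat.le_of_dvd (by norm_num) h
    have hp5 : p = 5 := by omega
    rw [hp5] at h
    norm_num at h
  have h2 : ¬ p ∣ 2 := fun h => h6 (h.trans (by norm_num))
  have h3 : ¬ p ∣ 3 := fun h => h6 (h.trans (by norm_num))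
  have h3ne : (3 : ZMod p) ≠ 0 := by
    have : ((3 : ℕ) : ZMod p) ≠ 0 := by
      rw [Ne, ZMod.natCast_eq_zero_iff]; exact h3
    exact_mod_cast this
  have h2ne : (2 : ZMod p) ≠ 0 := by
    have : ((2 : ℕ) : ZMod p) ≠ 0 := by
      rw [Ne, ZMod.natCast_eq_zero_iff]; exact h2
    exact_mod_cast this
  have L2 := lerch hp 2 h2
  have L3 := lerch hp 3 h3
  have L6 := lerch hp 6 h6
  push_cast at L2 L3 L6
  -- Lerch sums as combinations of interval sums
  have E2 : (2 : ZMod p) * (((2 ^ (p - 1) - 1) / p : ℕ) : ZMod p)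
      = T p (3*n+3) (4*n+4) + T p (4*n+4) (5*n+5) + T p (5*n+5) p := by
    have P1 : ∑ j ∈ Finset.Ico 1 (n+1), ((2 * j / p : ℕ) : ZMod p) * (j : ZMod p)⁻¹
        = ((0 : ℕ) : ZMod p) * T p 1 (n+1) :=
      sum_floor_const p 1 (n+1) 0 _ (fun j h1 h2 => Nat.div_eq_of_lt (by omega))
    have P2 : ∑ j ∈ Finset.Ico (n+1) (2*n+2), ((2 * j / p : ℕ) : ZMod p) * (j : ZMod p)⁻¹
        = ((0 : ℕ) : ZMod p) * T p (n+1) (2*n+2) :=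
      sum_floor_const p _ _ 0 _ (fun j h1 h2 => Nat.div_eq_of_lt (by omega))
    have P3 : ∑ j ∈ Finset.Ico (2*n+2) (3*n+3), ((2 * j / p : ℕ) : ZMod p) * (j : ZMod p)⁻¹
        = ((0 : ℕ) : ZMod p) * T p (2*n+2) (3*n+3) :=
      sum_floor_const p _ _ 0 _ (fun j h1 h2 => Nat.div_eq_of_lt (by omega))
    have P4 : ∑ j ∈ Finset.Ico (3*n+3) (4*n+4), ((2 * j / p : ℕ) : ZMod p) * (j : ZMod p)⁻¹
        = ((1 : ℕ) : ZMod p) * T p (3*n+3) (4*n+4) :=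
      sum_floor_const p _ _ 1 _ (fun j h1 h2 => Nat.div_eq_of_lt_le (by omega) (by omega))
    have P5 : ∑ j ∈ Finset.Ico (4*n+4) (5*n+5), ((2 * j / p : ℕ) : ZMod p) * (j : ZMod p)⁻¹
        = ((1 : ℕ) : ZMod p) * T p (4*n+4) (5*n+5) :=
      sum_floor_const p _ _ 1 _ (fun j h1 h2 => Nat.div_eq_of_lt_le (by omega) (by omega))
    have P6 : ∑ j ∈ Finset.Ico (5*n+5) p, ((2 * j / p : ℕ) : ZMod p) * (j : ZMod p)⁻¹
        = ((1 : ℕ) : ZMod p) * T p (5*n+5) p :=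
      sum_floor_const p _ _ 1 _ (fun j h1 h2 => Nat.div_eq_of_lt_le (by omega) (by omega))
    rw [L2,
      ← Finset.sum_Ico_consecutive (fun j => ((2 * j / p : ℕ) : ZMod p) * (j : ZMod p)⁻¹)
        (show (1:ℕ) ≤ 5*n+5 by omega) (show 5*n+5 ≤ p by omega),
      ← Finset.sum_Ico_consecutive (fun j => ((2 * j / p : ℕ) : ZMod p) * (j : ZMod p)⁻¹)
        (show (1:ℕ) ≤ 4*n+4 by omega) (show 4*n+4 ≤ 5*n+5 by omega),
      ← Finset.sum_Ico_consecutive (fun j => ((2 * j / p : ℕ) : ZMod p) * (j : ZMod p)⁻¹)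
        (show (1:ℕ) ≤ 3*n+3 by omega) (show 3*n+3 ≤ 4*n+4 by omega),
      ← Finset.sum_Ico_consecutive (fun j => ((2 * j / p : ℕ) : ZMod p) * (j : ZMod p)⁻¹)
        (show (1:ℕ) ≤ 2*n+2 by omega) (show 2*n+2 ≤ 3*n+3 by omega),
      ← Finset.sum_Ico_consecutive (fun j => ((2 * j / p : ℕ) : ZMod p) * (j : ZMod p)⁻¹)
        (show (1:ℕ) ≤ n+1 by omega) (show n+1 ≤ 2*n+2 by omega),
      P1, P2, P3, P4, P5, P6]
    push_cast
    ring
  have E3 : (3 : ZMod p) * (((3 ^ (p - 1) - 1) / p : ℕ) : ZMod p)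
      = T p (2*n+2) (3*n+3) + T p (3*n+3) (4*n+4)
        + 2 * T p (4*n+4) (5*n+5) + 2 * T p (5*n+5) p := by
    have P1 : ∑ j ∈ Finset.Ico 1 (n+1), ((3 * j / p : ℕ) : ZMod p) * (j : ZMod p)⁻¹
        = ((0 : ℕ) : ZMod p) * T p 1 (n+1) :=
      sum_floor_const p _ _ 0 _ (fun j h1 h2 => Nat.div_eq_of_lt (by omega))
    have P2 : ∑ j ∈ Finset.Ico (n+1) (2*n+2), ((3 * j / p : ℕ) : ZMod p) * (j : ZMod p)⁻¹
        = ((0 : ℕ) : ZMod p) * T p (n+1) (2*n+2) :=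
      sum_floor_const p _ _ 0 _ (fun j h1 h2 => Nat.div_eq_of_lt (by omega))
    have P3 : ∑ j ∈ Finset.Ico (2*n+2) (3*n+3), ((3 * j / p : ℕ) : ZMod p) * (j : ZMod p)⁻¹
        = ((1 : ℕ) : ZMod p) * T p (2*n+2) (3*n+3) :=
      sum_floor_const p _ _ 1 _ (fun j h1 h2 => Nat.div_eq_of_lt_le (by omega) (by omega))
    have P4 : ∑ j ∈ Finset.Ico (3*n+3) (4*n+4), ((3 * j / p : ℕ) : ZMod p) * (j : ZMod p)⁻¹
        = ((1 : ℕ) : ZMod p) * T p (3*n+3) (4*n+4) :=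
      sum_floor_const p _ _ 1 _ (fun j h1 h2 => Nat.div_eq_of_lt_le (by omega) (by omega))
    have P5 : ∑ j ∈ Finset.Ico (4*n+4) (5*n+5), ((3 * j / p : ℕ) : ZMod p) * (j : ZMod p)⁻¹
        = ((2 : ℕ) : ZMod p) * T p (4*n+4) (5*n+5) :=
      sum_floor_const p _ _ 2 _ (fun j h1 h2 => Nat.div_eq_of_lt_le (by omega) (by omega))
    have P6 : ∑ j ∈ Finset.Ico (5*n+5) p, ((3 * j / p : ℕ) : ZMod p) * (j : ZMod p)⁻¹
        = ((2 : ℕ) : ZMod p) * T p (5*n+5) p :=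
      sum_floor_const p _ _ 2 _ (fun j h1 h2 => Nat.div_eq_of_lt_le (by omega) (by omega))
    rw [L3,
      ← Finset.sum_Ico_consecutive (fun j => ((3 * j / p : ℕ) : ZMod p) * (j : ZMod p)⁻¹)
        (show (1:ℕ) ≤ 5*n+5 by omega) (show 5*n+5 ≤ p by omega),
      ← Finset.sum_Ico_consecutive (fun j => ((3 * j / p : ℕ) : ZMod p) * (j : ZMod p)⁻¹)
        (show (1:ℕ) ≤ 4*n+4 by omega) (show 4*n+4 ≤ 5*n+5 by omega),
      ← Finset.sum_Ico_consecutive (fun j => ((3 * j / p : ℕ) : ZMod p) * (j : ZMod p)⁻¹)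
        (show (1:ℕ) ≤ 3*n+3 by omega) (show 3*n+3 ≤ 4*n+4 by omega),
      ← Finset.sum_Ico_consecutive (fun j => ((3 * j / p : ℕ) : ZMod p) * (j : ZMod p)⁻¹)
        (show (1:ℕ) ≤ 2*n+2 by omega) (show 2*n+2 ≤ 3*n+3 by omega),
      ← Finset.sum_Ico_consecutive (fun j => ((3 * j / p : ℕ) : ZMod p) * (j : ZMod p)⁻¹)
        (show (1:ℕ) ≤ n+1 by omega) (show n+1 ≤ 2*n+2 by omega),
      P1, P2, P3, P4, P5, P6]
    push_cast
    ring
  have E6 : (6 : ZMod p) * (((6 ^ (p - 1) - 1) / p : ℕ) : ZMod p)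
      = T p (n+1) (2*n+2) + 2 * T p (2*n+2) (3*n+3) + 3 * T p (3*n+3) (4*n+4)
        + 4 * T p (4*n+4) (5*n+5) + 5 * T p (5*n+5) p := by
    have P1 : ∑ j ∈ Finset.Ico 1 (n+1), ((6 * j / p : ℕ) : ZMod p) * (j : ZMod p)⁻¹
        = ((0 : ℕ) : ZMod p) * T p 1 (n+1) :=
      sum_floor_const p _ _ 0 _ (fun j h1 h2 => Nat.div_eq_of_lt (by omega))
    have P2 : ∑ j ∈ Finset.Ico (n+1) (2*n+2), ((6 * j / p : ℕ) : ZMod p) * (j : ZMod p)⁻¹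
        = ((1 : ℕ) : ZMod p) * T p (n+1) (2*n+2) :=
      sum_floor_const p _ _ 1 _ (fun j h1 h2 => Nat.div_eq_of_lt_le (by omega) (by omega))
    have P3 : ∑ j ∈ Finset.Ico (2*n+2) (3*n+3), ((6 * j / p : ℕ) : ZMod p) * (j : ZMod p)⁻¹
        = ((2 : ℕ) : ZMod p) * T p (2*n+2) (3*n+3) :=
      sum_floor_const p _ _ 2 _ (fun j h1 h2 => Nat.div_eq_of_lt_le (by omega) (by omega))
    have P4 : ∑ j ∈ Finset.Ico (3*n+3) (4*n+4), ((6 * j / p : ℕ) : ZMod p) * (j : ZMod p)⁻¹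
        = ((3 : ℕ) : ZMod p) * T p (3*n+3) (4*n+4) :=
      sum_floor_const p _ _ 3 _ (fun j h1 h2 => Nat.div_eq_of_lt_le (by omega) (by omega))
    have P5 : ∑ j ∈ Finset.Ico (4*n+4) (5*n+5), ((6 * j / p : ℕ) : ZMod p) * (j : ZMod p)⁻¹
        = ((4 : ℕ) : ZMod p) * T p (4*n+4) (5*n+5) :=
      sum_floor_const p _ _ 4 _ (fun j h1 h2 => Nat.div_eq_of_lt_le (by omega) (by omega))
    have P6 : ∑ j ∈ Finset.Ico (5*n+5) p, ((6 * j / p : ℕ) : ZMod p) * (j : ZMod p)⁻¹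
        = ((5 : ℕ) : ZMod p) * T p (5*n+5) p :=
      sum_floor_const p _ _ 5 _ (fun j h1 h2 => Nat.div_eq_of_lt_le (by omega) (by omega))
    rw [L6,
      ← Finset.sum_Ico_consecutive (fun j => ((6 * j / p : ℕ) : ZMod p) * (j : ZMod p)⁻¹)
        (show (1:ℕ) ≤ 5*n+5 by omega) (show 5*n+5 ≤ p by omega),
      ← Finset.sum_Ico_consecutive (fun j => ((6 * j / p : ℕ) : ZMod p) * (j : ZMod p)⁻¹)
        (show (1:ℕ) ≤ 4*n+4 by omega) (show 4*n+4 ≤ 5*n+5 by omega),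
      ← Finset.sum_Ico_consecutive (fun j => ((6 * j / p : ℕ) : ZMod p) * (j : ZMod p)⁻¹)
        (show (1:ℕ) ≤ 3*n+3 by omega) (show 3*n+3 ≤ 4*n+4 by omega),
      ← Finset.sum_Ico_consecutive (fun j => ((6 * j / p : ℕ) : ZMod p) * (j : ZMod p)⁻¹)
        (show (1:ℕ) ≤ 2*n+2 by omega) (show 2*n+2 ≤ 3*n+3 by omega),
      ← Finset.sum_Ico_consecutive (fun j => ((6 * j / p : ℕ) : ZMod p) * (j : ZMod p)⁻¹)
        (show (1:ℕ) ≤ n+1 by omega) (show n+1 ≤ 2*n+2 by omega),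
      P1, P2, P3, P4, P5, P6]
    push_cast
    ring
  -- reflection relations
  have R3 : T p (3*n+3) (4*n+4) = -T p (2*n+2) (3*n+3) := by
    rw [T_reflect hp (3*n+3) (4*n+4) (by omega) (by omega)]
    have e1 : p + 1 - (4*n+4) = 2*n+2 := by omega
    have e2 : p + 1 - (3*n+3) = 3*n+3 := by omega
    rw [e1, e2]
  have R4 : T p (4*n+4) (5*n+5) = -T p (n+1) (2*n+2) := by
    rw [T_reflect hp (4*n+4) (5*n+5) (by omega) (by omega)]
    have e1 : p + 1 - (5*n+5) = n+1 := by omega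
    have e2 : p + 1 - (4*n+4) = 2*n+2 := by omega
    rw [e1, e2]
  have R5 : T p (5*n+5) p = -T p 1 (n+1) := by
    rw [T_reflect hp (5*n+5) p (by omega) (by omega)]
    have e1 : p + 1 - p = 1 := by omega
    have e2 : p + 1 - (5*n+5) = n+1 := by omega
    rw [e1, e2]
  -- q6 = q2 + q3
  have hferm_dvd : ∀ a : ℕ, ¬ p ∣ a → p ∣ a ^ (p-1) - 1 := by
    intro a ha
    have ha0 : (a : ZMod p) ≠ 0 := by rwa [Ne, ZMod.natCast_eq_zero_iff]
    have hf : (a : ZMod p) ^ (p - 1) = 1 := ZMod.pow_card_sub_one_eq_one ha0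
    rw [← ZMod.natCast_eq_zero_iff]
    have hge : 1 ≤ a ^ (p-1) := Nat.one_le_pow _ _ (Nat.pos_of_ne_zero (by rintro rfl; exact ha (dvd_zero p)))
    push_cast [Nat.cast_sub hge]
    rw [hf]; ring
  have hd2 := hferm_dvd 2 h2
  have hd3 := hferm_dvd 3 h3
  have hd6 := hferm_dvd 6 h6
  have hpq2 : p * ((2 ^ (p-1) - 1) / p) = 2 ^ (p-1) - 1 := Nat.mul_div_cancel' hd2
  have hpq3 : p * ((3 ^ (p-1) - 1) / p) = 3 ^ (p-1) - 1 := Nat.mul_div_cancel' hd3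
  have hpq6 : p * ((6 ^ (p-1) - 1) / p) = 6 ^ (p-1) - 1 := Nat.mul_div_cancel' hd6
  have hq6 : (((6 ^ (p-1) - 1) / p : ℕ) : ZMod p)
      = (((2 ^ (p-1) - 1) / p : ℕ) : ZMod p) + (((3 ^ (p-1) - 1) / p : ℕ) : ZMod p) := by
    have hC : 2 ^ (p-1) * 3 ^ (p-1) = 6 ^ (p-1) := by rw [← Nat.mul_pow]
    have hge2 : 1 ≤ 2 ^ (p-1) := Nat.one_le_pow _ _ (by norm_num)
    have hge3 : 1 ≤ 3 ^ (p-1) := Nat.one_le_pow _ _ (by norm_num)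
    have hge6 : 1 ≤ 6 ^ (p-1) := Nat.one_le_pow _ _ (by norm_num)
    have hBC : 3 ^ (p-1) ≤ 6 ^ (p-1) := Nat.pow_le_pow_left (by norm_num) _
    have hX : p * ((2 ^ (p-1) - 1) / p) * 3 ^ (p-1) = 6 ^ (p-1) - 3 ^ (p-1) := by
      rw [hpq2, Nat.sub_mul, one_mul, hC]
    have hnat : p * ((6 ^ (p-1) - 1) / p)
        = p * (((2 ^ (p-1) - 1) / p) * 3 ^ (p-1) + ((3 ^ (p-1) - 1) / p)) := by
      rw [Nat.mul_add, hpq6, ← Nat.mul_assoc, hX, hpq3]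
      omega
    have hq6nat : (6 ^ (p-1) - 1) / p = ((2 ^ (p-1) - 1) / p) * 3 ^ (p-1) + ((3 ^ (p-1) - 1) / p) :=
      Nat.eq_of_mul_eq_mul_left (by omega) hnat
    rw [hq6nat]
    push_cast
    have h30 : (3 : ZMod p) ^ (p - 1) = 1 := ZMod.pow_card_sub_one_eq_one h3ne
    rw [h30]
    ring
  -- reindex the target sum
  have RX : ∑ k ∈ Finset.range (n + 1), (3 : ZMod p) * ((3 * k + 2 : ℕ) : ZMod p)⁻¹
      = ∑ j ∈ Finset.Ico (n+1) (2*n+2), -((j : ZMod p)⁻¹) := by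
    refine Finset.sum_nbij' (fun k => 2*n+1-k) (fun j => 2*n+1-j) ?_ ?_ ?_ ?_ ?_
    · intro k hk; simp only [Finset.mem_range, Finset.mem_Ico] at *; omega
    · intro j hj; simp only [Finset.mem_range, Finset.mem_Ico] at *; omega
    · intro k hk; simp only [Finset.mem_range] at hk; show 2*n+1 - (2*n+1-k) = k; omega
    · intro j hj; simp only [Finset.mem_Ico] at hj; show 2*n+1 - (2*n+1-j) = j; omega
    · intro k hk
      simp only [Finset.mem_range] at hk
      have hcast : ((3 * k + 2 : ℕ) : ZMod p) = -(3 * ((2*n+1-k : ℕ) : ZMod p)) := by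
        have h : (3*k+2) + 3*(2*n+1-k) = p := by omega
        have hc := congrArg (Nat.cast : ℕ → ZMod p) h
        push_cast [Nat.cast_sub (show k ≤ 2*n+1 by omega)] at hc
        rw [ZMod.natCast_self] at hc
        push_cast [Nat.cast_sub (show k ≤ 2*n+1 by omega)]
        linear_combination hc
      rw [hcast, inv_neg, mul_inv, mul_neg, ← mul_assoc, mul_inv_cancel₀ h3ne, one_mul]
  have RX2 : (3 : ZMod p) * (∑ k ∈ Finset.range (n + 1), ((3 * k + 2 : ℕ) : ZMod p)⁻¹)
      = - T p (n+1) (2*n+2) := by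
    rw [Finset.mul_sum, RX, T]
    rw [Finset.sum_neg_distrib]
  -- linear algebra
  have hB2 : (2 : ZMod p) * T p (n+1) (2*n+2)
      = 2 * (2 * (((2 ^ (p-1) - 1) / p : ℕ) : ZMod p)) := by
    linear_combination -E6 + E2 + 2*E3 + 6*hq6 + R4
  have hB : T p (n+1) (2*n+2) = 2 * (((2 ^ (p-1) - 1) / p : ℕ) : ZMod p) :=
    mul_left_cancel₀ h2ne hB2
  linear_combination RX2 - hB

/-- The `n`-th harmonic number as a rational. -/
def H (n : ℕ) : ℚ := ∑ i ∈ Finset.range n, (1 : ℚ) / (i + 1)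

/-- Congruence of rationals modulo `m`: the difference is `m` times a rational
whose denominator is not divisible by `m`'s prime. -/
def ratCongr (m : ℕ) (x y : ℚ) : Prop :=
  ∃ r : ℚ, ¬ ((m : ℤ) ∣ (r.den : ℤ)) ∧ x - y = (m : ℚ) * r

theorem stmt11 (p : ℕ) (hp : p.Prime) (hp5 : 5 ≤ p) (h5 : p % 6 = 5) :
    ratCongr p (∑ k ∈ Finset.range ((p - 5) / 6 + 1), (1 : ℚ) / (3 * k + 2))
      (-(2 / 3) * ((2 ^ (p - 1) - 1 : ℚ) / p)) := by
  haveI : Fact p.Prime := ⟨hp⟩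
  obtain ⟨n, hn⟩ : ∃ n, p = 6 * n + 5 := ⟨(p - 5) / 6, by omega⟩
  have hrange : (p - 5) / 6 + 1 = n + 1 := by omega
  rw [hrange]
  have hp1 : 1 < p := hp.one_lt
  have h2 : ¬ p ∣ 2 := by intro h; have := Nat.le_of_dvd (by norm_num) h; omega
  have hd2 : p ∣ 2 ^ (p - 1) - 1 := by
    have h20 : ((2 : ℕ) : ZMod p) ≠ 0 := by
      rw [Ne, ZMod.natCast_eq_zero_iff]; exact h2
    have hf : ((2 : ℕ) : ZMod p) ^ (p - 1) = 1 := ZMod.pow_card_sub_one_eq_one h20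
    rw [← ZMod.natCast_eq_zero_iff]
    have hge : 1 ≤ 2 ^ (p - 1) := Nat.one_le_pow _ _ (by norm_num)
    push_cast [Nat.cast_sub hge]
    push_cast at hf
    rw [hf]; ring
  set q2 : ℕ := (2 ^ (p - 1) - 1) / p with hq2def
  have hpq2 : p * q2 = 2 ^ (p - 1) - 1 := Nat.mul_div_cancel' hd2
  have hcore := core hp n hn
  rw [← hq2def] at hcore
  set W : ℕ := ∏ k ∈ Finset.range (n + 1), (3 * k + 2) with hWdef
  set M : ℕ := ∑ k ∈ Finset.range (n + 1), W / (3 * k + 2) with hMdef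
  have hdvdW : ∀ k ∈ Finset.range (n + 1), (3 * k + 2) ∣ W := by
    intro k hk; rw [hWdef]; exact Finset.dvd_prod_of_mem _ hk
  have hne : ∀ k ∈ Finset.range (n + 1), ((3 * k + 2 : ℕ) : ZMod p) ≠ 0 := by
    intro k hk
    rw [Finset.mem_range] at hk
    rw [Ne, ZMod.natCast_eq_zero_iff]
    intro h
    have := Nat.le_of_dvd (by omega) h
    omega
  have hMz : ((M : ℕ) : ZMod p)
      = (W : ZMod p) * ∑ k ∈ Finset.range (n + 1), ((3 * k + 2 : ℕ) : ZMod p)⁻¹ := by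
    rw [hMdef]
    push_cast
    rw [Finset.mul_sum]
    refine Finset.sum_congr rfl (fun k hk => ?_)
    have hdiv : ((W / (3 * k + 2) : ℕ) : ZMod p) * ((3 * k + 2 : ℕ) : ZMod p) = (W : ZMod p) := by
      rw [← Nat.cast_mul, Nat.div_mul_cancel (hdvdW k hk)]
    apply mul_right_cancel₀ (hne k hk)
    push_cast at hdiv ⊢
    rw [mul_assoc, inv_mul_cancel₀ (by push_cast at hne ⊢; exact hne k hk), mul_one]
    linear_combination hdiv
  have hNz : ((3 * M + 2 * q2 * W : ℕ) : ZMod p) = 0 := by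
    push_cast
    rw [hMz]
    linear_combination (W : ZMod p) * hcore
  have hpN : p ∣ 3 * M + 2 * q2 * W := by rwa [← ZMod.natCast_eq_zero_iff]
  obtain ⟨N', hN'⟩ := hpN
  have hpW : ¬ p ∣ W := by
    rw [hWdef]
    refine Prime.not_dvd_finset_prod hp.prime ?_
    intro k hk h
    rw [Finset.mem_range] at hk
    have := Nat.le_of_dvd (by omega) h
    omega
  have hp3 : ¬ p ∣ 3 := by intro h; have := Nat.le_of_dvd (by norm_num) h; omega
  have hWQ : (W : ℚ) ≠ 0 := by
    rw [Nat.cast_ne_zero]; intro h; rw [h] at hpW; exact hpW (dvd_zero p)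
  have hpQ : (p : ℚ) ≠ 0 := Nat.cast_ne_zero.mpr (by omega)
  refine ⟨((N' : ℤ) : ℚ) / (((3 * W : ℕ) : ℤ) : ℚ), ?_, ?_⟩
  · intro hdvd
    have hden := Rat.den_dvd (N' : ℤ) ((3 * W : ℕ) : ℤ)
    rw [Rat.divInt_eq_div] at hden
    have hint : (p : ℤ) ∣ ((3 * W : ℕ) : ℤ) := dvd_trans hdvd hden
    have hp3W : p ∣ 3 * W := by exact_mod_cast hint
    rcases (Nat.Prime.dvd_mul hp).mp hp3W with h | h
    · exact hp3 h
    · exact hpW h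
  · have hterm : ∀ k ∈ Finset.range (n + 1),
        (1 : ℚ) / (3 * (k : ℚ) + 2) = ((W / (3 * k + 2) : ℕ) : ℚ) / (W : ℚ) := by
      intro k hk
      have h1 : ((W / (3 * k + 2) : ℕ) : ℚ) * ((3 * k + 2 : ℕ) : ℚ) = (W : ℚ) := by
        rw [← Nat.cast_mul, Nat.div_mul_cancel (hdvdW k hk)]
      have h2 : (3 * (k : ℚ) + 2) ≠ 0 := by positivity
      push_cast at h1
      field_simp
      linear_combination (-1 : ℚ) * h1
    have hx : (∑ k ∈ Finset.range (n + 1), (1 : ℚ) / (3 * (k : ℚ) + 2)) = (M : ℚ) / (W : ℚ) := by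
      rw [hMdef]
      push_cast
      rw [Finset.sum_div]
      refine Finset.sum_congr rfl (fun k hk => ?_)
      have := hterm k hk
      push_cast at this
      exact this
    have hy : ((2 ^ (p - 1) - 1 : ℚ) / p) = (q2 : ℚ) := by
      have hc : ((2 ^ (p - 1) - 1 : ℕ) : ℚ) = (2 : ℚ) ^ (p - 1) - 1 := by
        push_cast [Nat.cast_sub (Nat.one_le_pow _ _ (by norm_num : 0 < 2))]
        ring
      rw [← hc, ← hpq2]
      push_cast
      field_simp
    rw [hx, hy]
    have hNQ : (3 : ℚ) * M + 2 * q2 * W = p * N' := by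
      exact_mod_cast congrArg (Nat.cast : ℕ → ℚ) hN'
    push_cast
    field_simp
    linear_combination hNQ
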